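/- For every integer k ≥ 0 and every integer n ≥ 1, Σ_{A ⊆ leaves with |A| = k} m^{−|O_{e_n,A}|} ≤ m^{k^m} · n^{max(k−1, 0)}, where the sum is over all k-element sets A of words of length n over the alphabet {1,…,m}. -/

import Mathlib

noncomputable section

/-- Words over `{1,…,m}` of length at most `n` (the vertices of the tree). -/
abbrev Word (m n : ℕ) := Σ ℓ : Fin (n + 1), Fin (ℓ : ℕ) → Fin m

/-- `v_i`: the word obtained from the leaf word `v` by deleting its first `i` letters. -/
def wordDrop {m n : ℕ} (v : Fin n → Fin m) (i : ℕ) : Word m n :=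
  ⟨⟨n - i, Nat.lt_succ_of_le (Nat.sub_le n i)⟩,
    fun j => v ⟨i + (j : ℕ), by have h2 : (j : ℕ) < n - i := j.2; omega⟩⟩

open scoped Classical in
/-- `O_{e_n,A} = {v_i : v ∈ A, 1 ≤ i ≤ n}`. -/
def spineSet {m n : ℕ} (A : Finset (Fin n → Fin m)) : Finset (Word m n) :=
  (A ×ˢ Finset.Icc 1 n).image (fun q => wordDrop q.1 q.2)

open scoped Classical
open Finset

namespace SpineAux

variable {m n : ℕ}

lemma wordDrop_len (v : Fin n → Fin m) (i : ℕ) : ((wordDrop v i).1 : ℕ) = n - i := rfl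

lemma word_eq_len_zero (a b : Word m n) (ha : (a.1 : ℕ) = 0) (hb : (b.1 : ℕ) = 0) :
    a = b := by
  obtain ⟨⟨la, hla⟩, f⟩ := a
  obtain ⟨⟨lb, hlb⟩, g⟩ := b
  simp only at ha hb
  subst ha; subst hb
  have : f = g := funext fun j => absurd j.2 (by simp)
  rw [this]

lemma wordDrop_inj {v u : Fin n → Fin m} {i i' : ℕ} (hi : i ≤ n) (hi' : i' ≤ n)
    (h : wordDrop v i = wordDrop u i') :
    i = i' ∧ ∀ t : Fin n, i ≤ (t : ℕ) → v t = u t := by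
  have hfst : n - i = n - i' := congrArg (fun a => (a.1 : ℕ)) h
  have hii : i = i' := by omega
  subst hii
  refine ⟨rfl, ?_⟩
  have hsnd : (wordDrop v i).2 = (wordDrop u i).2 := by
    have := (Sigma.mk.inj_iff.mp h).2
    exact heq_iff_eq.mp this
  intro t ht
  have hlt : (t : ℕ) - i < n - i := by omega
  have := congrFun hsnd ⟨(t : ℕ) - i, hlt⟩
  simpa [wordDrop, show i + ((t : ℕ) - i) = (t : ℕ) by omega, Fin.eta] using this

lemma mem_spineSet {A : Finset (Fin n → Fin m)} {x : Word m n} :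
    x ∈ spineSet A ↔ ∃ v ∈ A, ∃ i, 1 ≤ i ∧ i ≤ n ∧ wordDrop v i = x := by
  simp only [spineSet, Finset.mem_image, Finset.mem_product, Finset.mem_Icc, Prod.exists]
  constructor
  · rintro ⟨v, i, ⟨hv, h1, h2⟩, rfl⟩; exact ⟨v, hv, i, h1, h2, rfl⟩
  · rintro ⟨v, hv, i, h1, h2, rfl⟩; exact ⟨v, i, ⟨hv, h1, h2⟩, rfl⟩

lemma spineSet_mono {A B : Finset (Fin n → Fin m)} (h : A ⊆ B) :
    spineSet A ⊆ spineSet B := by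
  intro x hx
  rw [mem_spineSet] at hx ⊢
  obtain ⟨v, hv, i, h1, h2, rfl⟩ := hx
  exact ⟨v, h hv, i, h1, h2, rfl⟩

lemma card_spine_singleton (v : Fin n → Fin m) : n ≤ (spineSet {v}).card := by
  have hsub : (Finset.Icc 1 n).image (wordDrop v) ⊆ spineSet {v} := by
    intro x hx
    rw [Finset.mem_image] at hx
    obtain ⟨i, hi, rfl⟩ := hx
    rw [Finset.mem_Icc] at hi
    exact mem_spineSet.mpr ⟨v, Finset.mem_singleton_self v, i, hi.1, hi.2, rfl⟩
  have hinj : Set.InjOn (wordDrop v) (Finset.Icc 1 n) := by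
    intro i hi j hj h
    rw [Finset.coe_Icc, Set.mem_Icc] at hi hj
    exact (wordDrop_inj hi.2 hj.2 h).1
  have := Finset.card_le_card hsub
  rwa [Finset.card_image_of_injOn hinj, Nat.card_Icc, Nat.add_sub_cancel] at this

/-- the smallest index `i ∈ [1,n]` with `wordDrop v i ∈ spineSet B` (0 if `v ∈ B`). -/
def dmin (B : Finset (Fin n → Fin m)) (v : Fin n → Fin m) : ℕ :=
  if v ∈ B then 0 else sInf {i | 1 ≤ i ∧ i ≤ n ∧ wordDrop v i ∈ spineSet B}

lemma dmin_setNonempty (hn : 1 ≤ n) {B : Finset (Fin n → Fin m)} (hB : B.Nonempty)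
    (v : Fin n → Fin m) :
    n ∈ {i | 1 ≤ i ∧ i ≤ n ∧ wordDrop v i ∈ spineSet B} := by
  obtain ⟨u, hu⟩ := hB
  refine ⟨hn, le_refl n, ?_⟩
  have : wordDrop v n = wordDrop u n :=
    word_eq_len_zero _ _ (by simp [wordDrop_len]) (by simp [wordDrop_len])
  rw [this, mem_spineSet]
  exact ⟨u, hu, n, hn, le_refl n, rfl⟩

lemma dmin_le (hn : 1 ≤ n) {B : Finset (Fin n → Fin m)} (hB : B.Nonempty)
    (v : Fin n → Fin m) : dmin B v ≤ n := by
  unfold dmin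
  split
  · omega
  · exact Nat.sInf_le (dmin_setNonempty hn hB v)

lemma dmin_spec (hn : 1 ≤ n) {B : Finset (Fin n → Fin m)} (hB : B.Nonempty)
    {v : Fin n → Fin m} (hv : v ∉ B) :
    1 ≤ dmin B v ∧ wordDrop v (dmin B v) ∈ spineSet B := by
  have h := Nat.sInf_mem ⟨n, dmin_setNonempty hn hB v⟩
  unfold dmin
  rw [if_neg hv]
  exact ⟨h.1, h.2.2⟩

lemma dmin_min {B : Finset (Fin n → Fin m)} {v : Fin n → Fin m} (hv : v ∉ B)
    {i : ℕ} (h1 : 1 ≤ i) (h2 : i ≤ n) (hlt : i < dmin B v) :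
    wordDrop v i ∉ spineSet B := by
  intro hmem
  have : dmin B v ≤ i := by
    unfold dmin; rw [if_neg hv]; exact Nat.sInf_le ⟨h1, h2, hmem⟩
  omega

lemma card_spine_insert (hn : 1 ≤ n) {B : Finset (Fin n → Fin m)} (hB : B.Nonempty)
    (v : Fin n → Fin m) :
    (spineSet B).card + (dmin B v - 1) ≤ (spineSet (insert v B)).card := by
  by_cases hv : v ∈ B
  · simp [dmin, hv, Finset.insert_eq_self.mpr hv]
  · set d := dmin B v with hd
    have hdn : d ≤ n := dmin_le hn hB v
    have hd1 : 1 ≤ d := (dmin_spec hn hB hv).1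
    set D := (Finset.Icc 1 (d - 1)).image (wordDrop v) with hD
    have hcardD : D.card = d - 1 := by
      rw [hD, Finset.card_image_of_injOn, Nat.card_Icc, Nat.add_sub_cancel]
      intro i hi j hj h
      rw [Finset.coe_Icc, Set.mem_Icc] at hi hj
      exact (wordDrop_inj (by omega) (by omega) h).1
    have hdisj : Disjoint (spineSet B) D := by
      rw [Finset.disjoint_right]
      intro x hx
      rw [hD, Finset.mem_image] at hx
      obtain ⟨i, hi, rfl⟩ := hx
      rw [Finset.mem_Icc] at hi
      exact dmin_min hv hi.1 (by omega) (by omega)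
    have hsub : spineSet B ∪ D ⊆ spineSet (insert v B) := by
      apply Finset.union_subset
      · exact spineSet_mono (Finset.subset_insert v B)
      · intro x hx
        rw [hD, Finset.mem_image] at hx
        obtain ⟨i, hi, rfl⟩ := hx
        rw [Finset.mem_Icc] at hi
        exact mem_spineSet.mpr ⟨v, Finset.mem_insert_self v B, i, hi.1, by omega, rfl⟩
    calc (spineSet B).card + (d - 1) = (spineSet B ∪ D).card := by
          rw [Finset.card_union_of_disjoint hdisj, hcardD]
      _ ≤ (spineSet (insert v B)).card := Finset.card_le_card hsub

lemma exists_witness (hn : 1 ≤ n) {B : Finset (Fin n → Fin m)} (hB : B.Nonempty)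
    (v : Fin n → Fin m) :
    ∃ u, u ∈ B ∧ ∀ t : Fin n, dmin B v ≤ (t : ℕ) → v t = u t := by
  by_cases hv : v ∈ B
  · exact ⟨v, hv, fun t _ => rfl⟩
  · obtain ⟨hd1, hdmem⟩ := dmin_spec hn hB hv
    have hdn : dmin B v ≤ n := dmin_le hn hB v
    rw [mem_spineSet] at hdmem
    obtain ⟨u, hu, i, hi1, hi2, heq⟩ := hdmem
    obtain ⟨hii, hag⟩ := wordDrop_inj hi2 hdn heq
    exact ⟨u, hu, fun t ht => (hag t (by omega)).symm⟩

lemma card_dmin_le (hn : 1 ≤ n) {B : Finset (Fin n → Fin m)} (hB : B.Nonempty)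
    {i : ℕ} (hi : i ≤ n) :
    (Finset.univ.filter (fun v : Fin n → Fin m => dmin B v ≤ i)).card ≤ B.card * m ^ i := by
  classical
  set uv : (Fin n → Fin m) → (Fin n → Fin m) := fun v =>
    if h : ∃ u, u ∈ B ∧ ∀ t : Fin n, dmin B v ≤ (t : ℕ) → v t = u t then h.choose else v
    with huv
  have huv_spec : ∀ v : Fin n → Fin m,
      uv v ∈ B ∧ ∀ t : Fin n, dmin B v ≤ (t : ℕ) → v t = uv v t := by
    intro v
    have h := exists_witness hn hB v
    rw [huv]
    simp only [dif_pos h]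
    exact h.choose_spec
  have := Finset.card_le_card_of_injOn
    (f := fun v : Fin n → Fin m => ((uv v, fun t : Fin i => v ⟨t, lt_of_lt_of_le t.2 hi⟩) :
        (Fin n → Fin m) × (Fin i → Fin m)))
    (s := Finset.univ.filter (fun v : Fin n → Fin m => dmin B v ≤ i))
    (t := B ×ˢ Finset.univ) ?_ ?_
  · calc (Finset.univ.filter (fun v : Fin n → Fin m => dmin B v ≤ i)).card
        ≤ (B ×ˢ (Finset.univ : Finset (Fin i → Fin m))).card := this
      _ = B.card * m ^ i := by
          rw [Finset.card_product, Finset.card_univ]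
          simp
  · intro v _
    rw [Finset.mem_coe, Finset.mem_product]
    exact ⟨(huv_spec v).1, Finset.mem_univ _⟩
  · intro v hv w hw h
    rw [Finset.coe_filter, Set.mem_setOf_eq] at hv hw
    have h1 : uv v = uv w := congrArg Prod.fst h
    have h2 := congrArg Prod.snd h
    funext t
    by_cases ht : (t : ℕ) < i
    · have := congrFun h2 ⟨(t : ℕ), ht⟩
      simpa [Fin.eta] using this
    · have hv' := (huv_spec v).2 t (by omega)
      have hw' := (huv_spec w).2 t (by omega)
      rw [hv', hw', h1]

lemma aux_pow_inv {m : ℕ} (hm : 2 ≤ m) (d : ℕ) :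
    ((m : ℝ) ^ (d - 1))⁻¹ ≤ (m : ℝ) * ((m : ℝ) ^ d)⁻¹ := by
  have hm0 : (0 : ℝ) < m := by positivity
  have hm1 : (1 : ℝ) ≤ m := by exact_mod_cast Nat.one_le_of_lt hm
  have h1 : (m : ℝ) ^ d ≤ (m : ℝ) ^ (d - 1 + 1) := pow_le_pow_right₀ hm1 (by omega)
  have h2 : ((m : ℝ) ^ (d - 1 + 1))⁻¹ ≤ ((m : ℝ) ^ d)⁻¹ :=
    inv_anti₀ (by positivity) h1
  calc ((m : ℝ) ^ (d - 1))⁻¹ = (m : ℝ) * ((m : ℝ) ^ (d - 1 + 1))⁻¹ := by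
        rw [pow_succ, mul_inv]
        field_simp
    _ ≤ (m : ℝ) * ((m : ℝ) ^ d)⁻¹ := by
        exact mul_le_mul_of_nonneg_left h2 (le_of_lt hm0)

lemma sum_inv_dmin (hm : 2 ≤ m) (hn : 1 ≤ n) {B : Finset (Fin n → Fin m)} (hB : B.Nonempty) :
    ∑ v : Fin n → Fin m, ((m : ℝ) ^ (dmin B v))⁻¹ ≤ (n + 1) * B.card := by
  have hm0 : (0 : ℝ) < m := by positivity
  have step1 : ∀ v : Fin n → Fin m, ((m : ℝ) ^ (dmin B v))⁻¹ ≤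
      ∑ i ∈ Finset.range (n + 1), (if dmin B v ≤ i then ((m : ℝ) ^ i)⁻¹ else 0) := by
    intro v
    have hd : dmin B v ∈ Finset.range (n + 1) := by
      rw [Finset.mem_range]
      exact Nat.lt_succ_of_le (dmin_le hn hB v)
    have := Finset.single_le_sum
      (f := fun i => (if dmin B v ≤ i then ((m : ℝ) ^ i)⁻¹ else 0))
      (fun i _ => by positivity) hd
    simpa using this
  calc ∑ v : Fin n → Fin m, ((m : ℝ) ^ (dmin B v))⁻¹
      ≤ ∑ v : Fin n → Fin m, ∑ i ∈ Finset.range (n + 1),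
          (if dmin B v ≤ i then ((m : ℝ) ^ i)⁻¹ else 0) :=
        Finset.sum_le_sum fun v _ => step1 v
    _ = ∑ i ∈ Finset.range (n + 1), ∑ v : Fin n → Fin m,
          (if dmin B v ≤ i then ((m : ℝ) ^ i)⁻¹ else 0) := Finset.sum_comm
    _ ≤ ∑ i ∈ Finset.range (n + 1), (B.card : ℝ) := by
        apply Finset.sum_le_sum
        intro i hi
        rw [Finset.mem_range] at hi
        have hcard := card_dmin_le hn hB (i := i) (by omega)
        rw [← Finset.sum_filter]
        rw [Finset.sum_const, nsmul_eq_mul]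
        calc ((Finset.univ.filter (fun v : Fin n → Fin m => dmin B v ≤ i)).card : ℝ) *
              ((m : ℝ) ^ i)⁻¹
            ≤ ((B.card * m ^ i : ℕ) : ℝ) * ((m : ℝ) ^ i)⁻¹ := by
              apply mul_le_mul_of_nonneg_right _ (by positivity)
              exact_mod_cast hcard
          _ = (B.card : ℝ) := by
              push_cast
              field_simp
    _ = (n + 1) * B.card := by
        rw [Finset.sum_const, Finset.card_range, nsmul_eq_mul]
        push_cast
        ring

lemma inner_sum_le (hm : 2 ≤ m) (hn : 1 ≤ n) {B : Finset (Fin n → Fin m)} (hB : B.Nonempty) :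
    ∑ v : Fin n → Fin m, ((m : ℝ) ^ (spineSet (insert v B)).card)⁻¹ ≤
      (m : ℝ) * ((n + 1) * B.card) * ((m : ℝ) ^ (spineSet B).card)⁻¹ := by
  have hm0 : (0 : ℝ) < m := by positivity
  have hm1 : (1 : ℝ) ≤ m := by exact_mod_cast Nat.one_le_of_lt hm
  have step1 : ∀ v : Fin n → Fin m,
      ((m : ℝ) ^ (spineSet (insert v B)).card)⁻¹ ≤
        ((m : ℝ) ^ (spineSet B).card)⁻¹ * ((m : ℝ) * ((m : ℝ) ^ (dmin B v))⁻¹) := by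
    intro v
    have hc := card_spine_insert hn hB v
    have h1 : ((m : ℝ) ^ (spineSet (insert v B)).card)⁻¹ ≤
        ((m : ℝ) ^ ((spineSet B).card + (dmin B v - 1)))⁻¹ :=
      inv_anti₀ (by positivity) (pow_le_pow_right₀ hm1 hc)
    calc ((m : ℝ) ^ (spineSet (insert v B)).card)⁻¹
        ≤ ((m : ℝ) ^ ((spineSet B).card + (dmin B v - 1)))⁻¹ := h1
      _ = ((m : ℝ) ^ (spineSet B).card)⁻¹ * ((m : ℝ) ^ (dmin B v - 1))⁻¹ := by
          rw [pow_add, mul_inv]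
      _ ≤ ((m : ℝ) ^ (spineSet B).card)⁻¹ * ((m : ℝ) * ((m : ℝ) ^ (dmin B v))⁻¹) :=
          mul_le_mul_of_nonneg_left (aux_pow_inv hm _) (by positivity)
  calc ∑ v : Fin n → Fin m, ((m : ℝ) ^ (spineSet (insert v B)).card)⁻¹
      ≤ ∑ v : Fin n → Fin m,
          ((m : ℝ) ^ (spineSet B).card)⁻¹ * ((m : ℝ) * ((m : ℝ) ^ (dmin B v))⁻¹) :=
        Finset.sum_le_sum fun v _ => step1 v
    _ = ((m : ℝ) ^ (spineSet B).card)⁻¹ * (m : ℝ) *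
          ∑ v : Fin n → Fin m, ((m : ℝ) ^ (dmin B v))⁻¹ := by
        rw [Finset.mul_sum]
        apply Finset.sum_congr rfl
        intro v _
        ring
    _ ≤ ((m : ℝ) ^ (spineSet B).card)⁻¹ * (m : ℝ) * ((n + 1) * B.card) := by
        apply mul_le_mul_of_nonneg_left (sum_inv_dmin hm hn hB) (by positivity)
    _ = (m : ℝ) * ((n + 1) * B.card) * ((m : ℝ) ^ (spineSet B).card)⁻¹ := by ring

lemma sum_succ_le (k : ℕ) :
    ∑ A ∈ Finset.powersetCard (k + 1) (Finset.univ : Finset (Fin n → Fin m)),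
        ((m : ℝ) ^ (spineSet A).card)⁻¹ ≤
      ∑ B ∈ Finset.powersetCard k (Finset.univ : Finset (Fin n → Fin m)),
        ∑ v : Fin n → Fin m, ((m : ℝ) ^ (spineSet (insert v B)).card)⁻¹ := by
  classical
  set L := Fin n → Fin m
  set f : Finset L → ℝ := fun A => ((m : ℝ) ^ (spineSet A).card)⁻¹ with hf
  have hf0 : ∀ A, 0 ≤ f A := fun A => by rw [hf]; positivity
  set P := Finset.powersetCard (k + 1) (Finset.univ : Finset L) with hP
  set S := P.sigma (fun A => A) with hS
  set e : ((_ : Finset L) × L) → Finset L × L := fun p => (p.1.erase p.2, p.2) with he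
  have hinj : Set.InjOn e S := by
    intro p hp q hq hpq
    rw [Finset.mem_coe, hS, Finset.mem_sigma] at hp hq
    have h2 : p.2 = q.2 := congrArg Prod.snd hpq
    have h1 : p.1.erase p.2 = q.1.erase q.2 := congrArg Prod.fst hpq
    have hfst : p.1 = q.1 := by
      rw [← Finset.insert_erase hp.2, ← Finset.insert_erase hq.2, h1, h2]
    exact Sigma.ext hfst (by rw [h2])
  calc ∑ A ∈ P, f A
      ≤ ∑ A ∈ P, ∑ _a ∈ A, f A := by
        apply Finset.sum_le_sum
        intro A hA
        rw [hP, Finset.mem_powersetCard] at hA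
        obtain ⟨a, ha⟩ : A.Nonempty := by
          rw [← Finset.card_pos, hA.2]; omega
        exact Finset.single_le_sum (fun a _ => hf0 A) ha
    _ = ∑ p ∈ S, f p.1 := by rw [hS, Finset.sum_sigma]
    _ = ∑ p ∈ S, f (insert (e p).2 (e p).1) := by
        apply Finset.sum_congr rfl
        intro p hp
        rw [hS, Finset.mem_sigma] at hp
        rw [he]
        simp only
        rw [Finset.insert_erase hp.2]
    _ = ∑ q ∈ S.image e, f (insert q.2 q.1) := by
        rw [Finset.sum_image]
        intro p hp q hq hpq
        exact hinj (Finset.mem_coe.mpr hp) (Finset.mem_coe.mpr hq) hpq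
    _ ≤ ∑ q ∈ (Finset.powersetCard k (Finset.univ : Finset L)) ×ˢ Finset.univ,
          f (insert q.2 q.1) := by
        apply Finset.sum_le_sum_of_subset_of_nonneg
        · intro q hq
          rw [Finset.mem_image] at hq
          obtain ⟨p, hp, rfl⟩ := hq
          rw [hS, Finset.mem_sigma] at hp
          have hp1 := hp.1
          rw [hP, Finset.mem_powersetCard] at hp1
          rw [Finset.mem_product]
          constructor
          · rw [Finset.mem_powersetCard]
            refine ⟨Finset.Subset.trans (Finset.erase_subset _ _) hp1.1, ?_⟩
            rw [Finset.card_erase_of_mem hp.2, hp1.2]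
            omega
          · exact Finset.mem_univ _
        · intro q _ _
          exact hf0 _
    _ = ∑ B ∈ Finset.powersetCard k (Finset.univ : Finset L),
          ∑ v : L, f (insert v B) := by rw [Finset.sum_product]

lemma sum_one_le (hm : 2 ≤ m) (hn : 1 ≤ n) :
    ∑ A ∈ Finset.powersetCard 1 (Finset.univ : Finset (Fin n → Fin m)),
        ((m : ℝ) ^ (spineSet A).card)⁻¹ ≤ 1 := by
  have hm0 : (0 : ℝ) < m := by positivity
  have hm1 : (1 : ℝ) ≤ m := by exact_mod_cast Nat.one_le_of_lt hm
  rw [Finset.powersetCard_one, Finset.sum_map]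
  simp only [Function.Embedding.coeFn_mk]
  calc ∑ v : Fin n → Fin m, ((m : ℝ) ^ (spineSet {v}).card)⁻¹
      ≤ ∑ _v : Fin n → Fin m, ((m : ℝ) ^ n)⁻¹ := by
        apply Finset.sum_le_sum
        intro v _
        exact inv_anti₀ (by positivity)
          (pow_le_pow_right₀ hm1 (card_spine_singleton v))
    _ = 1 := by
        rw [Finset.sum_const, Finset.card_univ, nsmul_eq_mul]
        have : (Fintype.card (Fin n → Fin m) : ℝ) = (m : ℝ) ^ n := by
          simp
        rw [this]
        field_simp

lemma main_bound (hm : 2 ≤ m) (hn : 1 ≤ n) :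
    ∀ k : ℕ, 1 ≤ k →
      ∑ A ∈ Finset.powersetCard k (Finset.univ : Finset (Fin n → Fin m)),
          ((m : ℝ) ^ (spineSet A).card)⁻¹ ≤
        ((m : ℝ) * ((n : ℝ) + 1)) ^ (k - 1) * ((Nat.factorial (k - 1)) : ℝ) := by
  intro k hk
  induction k, hk using Nat.le_induction with
  | base => simpa using sum_one_le hm hn
  | succ k hk ih =>
    have ih' := ih
    calc ∑ A ∈ Finset.powersetCard (k + 1) (Finset.univ : Finset (Fin n → Fin m)),
          ((m : ℝ) ^ (spineSet A).card)⁻¹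
        ≤ ∑ B ∈ Finset.powersetCard k (Finset.univ : Finset (Fin n → Fin m)),
            ∑ v : Fin n → Fin m, ((m : ℝ) ^ (spineSet (insert v B)).card)⁻¹ :=
          sum_succ_le k
      _ ≤ ∑ B ∈ Finset.powersetCard k (Finset.univ : Finset (Fin n → Fin m)),
            (m : ℝ) * (((n : ℝ) + 1) * k) * ((m : ℝ) ^ (spineSet B).card)⁻¹ := by
          apply Finset.sum_le_sum
          intro B hB
          rw [Finset.mem_powersetCard] at hB
          have hBk : B.card = k := hB.2
          have hBne : B.Nonempty := by rw [← Finset.card_pos, hBk]; omega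
          have := inner_sum_le hm hn hBne
          rw [hBk] at this
          exact_mod_cast this
      _ = (m : ℝ) * (((n : ℝ) + 1) * k) *
            ∑ B ∈ Finset.powersetCard k (Finset.univ : Finset (Fin n → Fin m)),
              ((m : ℝ) ^ (spineSet B).card)⁻¹ := by rw [Finset.mul_sum]
      _ ≤ (m : ℝ) * (((n : ℝ) + 1) * k) *
            (((m : ℝ) * ((n : ℝ) + 1)) ^ (k - 1) * ((Nat.factorial (k - 1)) : ℝ)) := by
          apply mul_le_mul_of_nonneg_left ih'
          have : (0 : ℝ) ≤ m := by positivity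
          positivity
      _ = ((m : ℝ) * ((n : ℝ) + 1)) ^ (k + 1 - 1) * ((Nat.factorial (k + 1 - 1)) : ℝ) := by
          have h1 : ((m : ℝ) * ((n : ℝ) + 1)) ^ k =
              ((m : ℝ) * ((n : ℝ) + 1)) ^ (k - 1) * ((m : ℝ) * ((n : ℝ) + 1)) := by
            rw [← pow_succ]
            congr 1
            omega
          have h2 : ((Nat.factorial k) : ℝ) = (k : ℝ) * ((Nat.factorial (k - 1)) : ℝ) := by
            have := Nat.mul_factorial_pred (by omega : k ≠ 0)
            calc ((Nat.factorial k) : ℝ) = ((k * Nat.factorial (k-1) : ℕ) : ℝ) := by rw [this]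
              _ = (k : ℝ) * ((Nat.factorial (k - 1)) : ℝ) := by push_cast; ring
          simp only [Nat.add_sub_cancel]
          rw [h1, h2]
          ring

lemma nat_bound {m : ℕ} (hm : 2 ≤ m) (k : ℕ) (hk : 1 ≤ k) :
    (2 * m) ^ (k - 1) * Nat.factorial (k - 1) ≤ m ^ (k ^ m) := by
  set j := k - 1 with hj
  have h1 : (2 * m) ^ j ≤ (m * m) ^ j := Nat.pow_le_pow_left (Nat.mul_le_mul_right m hm) j
  have h2 : Nat.factorial j ≤ j ^ j := Nat.factorial_le_pow j
  have h3 : j ^ j ≤ (m ^ j) ^ j := by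
    apply Nat.pow_le_pow_left
    calc j ≤ 2 ^ j := Nat.le_of_lt (Nat.lt_two_pow_self (n := j))
      _ ≤ m ^ j := Nat.pow_le_pow_left hm j
  have hexp : 2 * j + j * j < k ^ 2 := by
    have hkj : k = j + 1 := by omega
    have : k ^ 2 = j * j + 2 * j + 1 := by rw [hkj]; ring
    omega
  have hk2 : k ^ 2 ≤ k ^ m := Nat.pow_le_pow_right (by omega) hm
  calc (2 * m) ^ j * Nat.factorial j ≤ (m * m) ^ j * (m ^ j) ^ j :=
        Nat.mul_le_mul h1 (le_trans h2 h3)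
    _ = m ^ (2 * j + j * j) := by rw [show m * m = m ^ 2 from (sq m).symm, ← pow_mul, ← pow_mul, ← pow_add]
    _ ≤ m ^ (k ^ m) := Nat.pow_le_pow_right (by omega) (by omega)

end SpineAux

/-- Lemma 3.5. For every `k ≥ 0` and `n ≥ 1`,
`Σ_{A ⊆ leaves, |A| = k} m^{-|O_{e_n,A}|} ≤ m^{k^m} n^{(k-1)⁺}`. -/
theorem spine_count_bound
    (m : ℕ) (hm : 2 ≤ m) (n : ℕ) (hn : 1 ≤ n) (k : ℕ) :
    ∑ A ∈ Finset.powersetCard k (Finset.univ : Finset (Fin n → Fin m)),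
        ((m : ℝ) ^ (spineSet A).card)⁻¹ ≤
      (m : ℝ) ^ (k ^ m) * (n : ℝ) ^ (k - 1) := by
  rcases Nat.eq_zero_or_pos k with hk | hk
  · subst hk
    rw [Finset.powersetCard_zero]
    have h0 : spineSet (∅ : Finset (Fin n → Fin m)) = ∅ := by
      simp [spineSet]
    rw [Finset.sum_singleton, h0]
    simp [zero_pow (by omega : m ≠ 0)]
  · have hmain := SpineAux.main_bound hm hn k hk
    have hn1 : ((n : ℝ) + 1) ≤ 2 * (n : ℝ) := by
      have : (1 : ℝ) ≤ (n : ℝ) := by exact_mod_cast hn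
      linarith
    have hnat := SpineAux.nat_bound hm k hk
    have hnatR : ((2 * m : ℕ) : ℝ) ^ (k - 1) * ((Nat.factorial (k - 1) : ℕ) : ℝ) ≤ (m : ℝ) ^ (k ^ m) := by
      exact_mod_cast hnat
    calc ∑ A ∈ Finset.powersetCard k (Finset.univ : Finset (Fin n → Fin m)),
          ((m : ℝ) ^ (spineSet A).card)⁻¹
        ≤ ((m : ℝ) * ((n : ℝ) + 1)) ^ (k - 1) * ((Nat.factorial (k - 1)) : ℝ) := hmain
      _ ≤ ((m : ℝ) * (2 * (n : ℝ))) ^ (k - 1) * ((Nat.factorial (k - 1)) : ℝ) := by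
          apply mul_le_mul_of_nonneg_right _ (by positivity)
          apply pow_le_pow_left₀ (by positivity)
          apply mul_le_mul_of_nonneg_left hn1 (by positivity)
      _ = ((2 * m : ℕ) : ℝ) ^ (k - 1) * ((Nat.factorial (k - 1)) : ℝ) * (n : ℝ) ^ (k - 1) := by
          push_cast
          rw [mul_pow, mul_pow]
          ring
      _ ≤ (m : ℝ) ^ (k ^ m) * (n : ℝ) ^ (k - 1) := by
          apply mul_le_mul_of_nonneg_right hnatR (by positivity)
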